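/- arXiv:1408.4630 — 2 statements merged into one kernel-verified Lean document; each statement's English description precedes it below -/
import Mathlib

section
/- Let L be a full-rank lattice in ℝ^k with fundamental parallelotope of volume 1, and for R > 0 let L(R) = {x ∈ L : ‖x‖ ≤ R, x ≠ 0}. Then ∑_{x ∈ L(R)} ‖x‖² = c₂R^{k+2} + O(R^{k+1}), where c₂ is a constant independent of R and of the lattice L. -/
open Filter Asymptotics MeasureTheory Submodule Pointwise Metric Set

lemma pow_gap (n : ℕ) {a b : ℝ} (hb : 0 ≤ b) (hab : b ≤ a) :
    a ^ (n + 1) - b ^ (n + 1) ≤ (n + 1) * (a - b) * a ^ n := by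
  induction n with
  | zero => simp
  | succ n ih =>
    have ha : 0 ≤ a := hb.trans hab
    have h1 : b ^ (n + 1) ≤ a ^ (n + 1) := pow_le_pow_left₀ hb hab _
    have h2 : a ^ (n + 1 + 1) - b ^ (n + 1 + 1)
        = a * (a ^ (n + 1) - b ^ (n + 1)) + (a - b) * b ^ (n + 1) := by ring
    have h3 : a * (a ^ (n + 1) - b ^ (n + 1)) ≤ a * ((n + 1) * (a - b) * a ^ n) :=
      mul_le_mul_of_nonneg_left ih ha
    have h4 : (a - b) * b ^ (n + 1) ≤ (a - b) * a ^ (n + 1) :=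
      mul_le_mul_of_nonneg_left h1 (by linarith)
    have : a * ((n + 1) * (a - b) * a ^ n) = (n + 1) * (a - b) * a ^ (n + 1) := by ring
    push_cast
    nlinarith [pow_nonneg ha n]

lemma int_scale (k : ℕ) {R : ℝ} (hR : 0 < R) :
    ∫ y in closedBall (0 : EuclideanSpace ℝ (Fin k)) R, ‖y‖ ^ 2
      = (∫ y in closedBall (0 : EuclideanSpace ℝ (Fin k)) 1, ‖y‖ ^ 2) * R ^ (k + 2) := by
  have hfr : Module.finrank ℝ (EuclideanSpace ℝ (Fin k)) = k := by
    simp [finrank_euclideanSpace]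
  have h := Measure.setIntegral_comp_smul_of_pos (volume) (fun y : EuclideanSpace ℝ (Fin k) => ‖y‖ ^ 2)
      (closedBall (0 : EuclideanSpace ℝ (Fin k)) 1) hR
  rw [hfr] at h
  have hball : R • closedBall (0 : EuclideanSpace ℝ (Fin k)) 1 = closedBall 0 R := by
    rw [_root_.smul_closedBall R (0 : EuclideanSpace ℝ (Fin k)) zero_le_one, smul_zero]
    simp [Real.norm_eq_abs, abs_of_pos hR]
  rw [hball] at h
  have hlhs : ∫ y in closedBall (0 : EuclideanSpace ℝ (Fin k)) 1,
      (fun y : EuclideanSpace ℝ (Fin k) => ‖y‖ ^ 2) (R • y)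
      = R ^ 2 * ∫ y in closedBall (0 : EuclideanSpace ℝ (Fin k)) 1, ‖y‖ ^ 2 := by
    rw [← integral_const_mul]
    congr 1 with y
    simp [norm_smul, abs_of_pos hR, mul_pow]
  rw [hlhs] at h
  rw [smul_eq_mul, eq_inv_mul_iff_mul_eq₀ (by positivity : R ^ k ≠ 0)] at h
  rw [← h, pow_add]
  ring

lemma integrableOn_normsq_of_bounded {k : ℕ} {s : Set (EuclideanSpace ℝ (Fin k))}
    {r : ℝ} (hs : MeasurableSet s) (hsub : s ⊆ closedBall 0 r) :
    IntegrableOn (fun y : EuclideanSpace ℝ (Fin k) => ‖y‖ ^ 2) s := by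
  have hcb : IntegrableOn (fun y : EuclideanSpace ℝ (Fin k) => ‖y‖ ^ 2) (closedBall 0 r) :=
    ((continuous_norm.pow 2).continuousOn).integrableOn_compact (isCompact_closedBall 0 r)
  exact hcb.mono_set hsub

set_option maxHeartbeats 2000000 in
/-- For a full-rank lattice `L ⊂ ℝ^k` with fundamental parallelotope of volume 1,
`∑_{x ∈ L(R)} ‖x‖² = c₂ R^{k+2} + O(R^{k+1})`, where `c₂` is independent of `R` and `L`. -/
theorem lattice_norm_sq_sum (k : ℕ) (hk : 0 < k) :
    ∃ c₂ : ℝ, ∀ b : Fin k → EuclideanSpace ℝ (Fin k),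
      LinearIndependent ℝ b →
      |Matrix.det (Matrix.of fun i j => b i j)| = 1 →
      (fun R : ℝ =>
          (∑ᶠ x ∈ {x : EuclideanSpace ℝ (Fin k) |
              x ∈ Submodule.span ℤ (Set.range b) ∧ ‖x‖ ≤ R ∧ x ≠ 0}, ‖x‖ ^ 2)
            - c₂ * R ^ (k + 2))
        =O[atTop] fun R : ℝ => R ^ (k + 1) := by
  classical
  set E := EuclideanSpace ℝ (Fin k)
  set c₂ : ℝ := ∫ y in closedBall (0 : E) 1, ‖y‖ ^ 2 with hc₂def
  have hc₂nonneg : 0 ≤ c₂ :=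
    setIntegral_nonneg measurableSet_closedBall (fun y _ => by positivity)
  refine ⟨c₂, ?_⟩
  intro b hb hdet
  have : Nonempty (Fin k) := ⟨⟨0, hk⟩⟩
  have hcard : Fintype.card (Fin k) = Module.finrank ℝ E := by
    simp [E, finrank_euclideanSpace]
  set B : Module.Basis (Fin k) ℝ E := basisOfLinearIndependentOfCardEqFinrank hb hcard with hBdef
  have hBb : ⇑B = b := coe_basisOfLinearIndependentOfCardEqFinrank hb hcard
  rw [show Set.range b = Set.range ⇑B by rw [hBb]]
  set L := span ℤ (Set.range ⇑B) with hLdef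
  set D := ZSpan.fundamentalDomain B with hDdef
  have hmeasD : MeasurableSet D := ZSpan.fundamentalDomain_measurableSet B
  -- volume of the fundamental domain is 1
  have hvolD : volume D = 1 := by
    let ℓ : E ≃ₗ[ℝ] (Fin k → ℝ) := WithLp.linearEquiv 2 ℝ (Fin k → ℝ)
    have hmp := EuclideanSpace.volume_preserving_symm_measurableEquiv_toLp (Fin k)
    have himg : (MeasurableEquiv.toLp 2 (Fin k → ℝ)).symm '' D
        = ZSpan.fundamentalDomain (B.map ℓ) := by
      rw [hDdef, ← ZSpan.map_fundamentalDomain B ℓ]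
      rfl
    have hmeas2 : MeasurableSet (ZSpan.fundamentalDomain (B.map ℓ)) :=
      ZSpan.fundamentalDomain_measurableSet _
    have h1 : volume D = volume (ZSpan.fundamentalDomain (B.map ℓ)) := by
      rw [← hmp.measure_preimage hmeas2.nullMeasurableSet, ← himg,
        MeasurableEquiv.preimage_image]
    rw [h1, ZSpan.volume_fundamentalDomain]
    have heq : (Matrix.of ⇑(B.map ℓ)) = (Matrix.of fun i j => B i j) := by
      ext i j
      rw [Matrix.of_apply, Matrix.of_apply, Module.Basis.map_apply]
      rfl
    have heq2 : (Matrix.of fun i j => B i j) = (Matrix.of fun i j => b i j) := by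
      rw [hBb]
    rw [heq, heq2, hdet]
    simp
  -- bound on the fundamental domain
  obtain ⟨d, hd0, hd⟩ : ∃ d : ℝ, 0 ≤ d ∧ ∀ y ∈ D, ‖y‖ ≤ d := by
    obtain ⟨c, hc⟩ := (isBounded_iff_forall_norm_le).mp (ZSpan.fundamentalDomain_isBounded B)
    exact ⟨max c 0, le_max_right _ _, fun y hy => (hc y hy).trans (le_max_left _ _)⟩
  -- cells
  set C : E → Set E := fun x => x +ᵥ D with hCdef
  have hmeasC : ∀ x : E, MeasurableSet (C x) := fun x => hmeasD.const_vadd x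
  have hvolC : ∀ x : E, volume (C x) = 1 := by
    intro x
    have h1 : C x = (x + ·) '' D := rfl
    rw [h1, Set.image_add_left, measure_preimage_add]
    exact hvolD
  have hmemC : ∀ (x y : E), y ∈ C x ↔ y - x ∈ D := by
    intro x y
    constructor
    · rintro ⟨z, hz, rfl⟩; simpa using hz
    · intro h; exact ⟨y - x, h, by simp⟩
  have hdisj : ∀ x ∈ L, ∀ x' ∈ L, x ≠ x' → Disjoint (C x) (C x') := by
    intro x hx x' hx' hne
    rw [Set.disjoint_left]
    rintro y hy hy'
    have h1 : y - x ∈ D := (hmemC x y).mp hy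
    have h1' : y - x' ∈ D := (hmemC x' y).mp hy'
    have hu := ZSpan.exist_unique_vadd_mem_fundamentalDomain B y
    have e1 : ((⟨-x, neg_mem hx⟩ : L) : E) +ᵥ y = y - x := by
      simp [vadd_eq_add]; abel
    have e2 : ((⟨-x', neg_mem hx'⟩ : L) : E) +ᵥ y = y - x' := by
      simp [vadd_eq_add]; abel
    have huniq := hu.unique (y₁ := ⟨-x, neg_mem hx⟩) (y₂ := ⟨-x', neg_mem hx'⟩)
      (by rw [show ((⟨-x, neg_mem hx⟩ : L) +ᵥ y) = y - x from e1]; exact h1)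
      (by rw [show ((⟨-x', neg_mem hx'⟩ : L) +ᵥ y) = y - x' from e2]; exact h1')
    apply hne
    have := Subtype.ext_iff.mp huniq
    exact neg_injective this
  have hcover : ∀ y : E, ∃ x, x ∈ L ∧ y ∈ C x ∧ ‖x‖ ≤ ‖y‖ + d := by
    intro y
    refine ⟨(ZSpan.floor B y : E), SetLike.coe_mem _, ?_, ?_⟩
    · refine ⟨y - (ZSpan.floor B y : E), ?_, by simp⟩
      rw [← ZSpan.fract_apply]
      exact ZSpan.fract_mem_fundamentalDomain B y
    · have h1 : ‖ZSpan.fract B y‖ ≤ d := hd _ (ZSpan.fract_mem_fundamentalDomain B y)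
      have h2 : (ZSpan.floor B y : E) = y - ZSpan.fract B y := by
        rw [ZSpan.fract_apply]; abel
      rw [h2]
      calc ‖y - ZSpan.fract B y‖ ≤ ‖y‖ + ‖ZSpan.fract B y‖ := norm_sub_le _ _
        _ ≤ ‖y‖ + d := by linarith
  -- the norm-squared integral over closed balls
  set I : ℝ → ℝ := fun r => ∫ y in closedBall (0 : E) r, ‖y‖ ^ 2 with hIdef
  set cD : ℝ := ∫ y in D, ‖y‖ ^ 2 with hcDdef
  have hDsub : D ⊆ closedBall (0 : E) d := fun y hy => by
    simpa [mem_closedBall, dist_eq_norm] using hd y hy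
  have hcDnonneg : 0 ≤ cD := setIntegral_nonneg hmeasD (fun y _ => by positivity)
  set Vb : ℝ := (volume (closedBall (0 : E) 1)).toReal with hVbdef
  have hVbnonneg : 0 ≤ Vb := ENNReal.toReal_nonneg
  -- main estimate
  rw [isBigO_iff]
  refine ⟨Vb * 2 ^ k * 3 * d + c₂ * (k + 2) * (2 * d) * 2 ^ (k + 1) + cD, ?_⟩
  filter_upwards [eventually_ge_atTop (d + 1)] with R hR
  have hR1 : (1:ℝ) ≤ R := by linarith
  have hR0 : (0:ℝ) < R := by linarith
  -- the finite set of lattice points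
  have hTfin : {x : E | x ∈ L ∧ ‖x‖ ≤ R ∧ x ≠ 0}.Finite := by
    have hdisc : DiscreteTopology L := inferInstance
    have hclosed : IsClosed ((L : Submodule ℤ E) : Set E) := by
      have : DiscreteTopology L.toAddSubgroup := hdisc
      exact AddSubgroup.isClosed_of_discrete (H := L.toAddSubgroup)
    have hfin : (closedBall (0 : E) R ∩ ((L : Submodule ℤ E) : Set E)).Finite :=
      Metric.finite_isBounded_inter_isClosed DiscreteTopology.isDiscrete isBounded_closedBall hclosed
    refine hfin.subset ?_
    rintro x ⟨hx1, hx2, _⟩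
    exact ⟨by simpa [mem_closedBall, dist_eq_norm] using hx2, hx1⟩
  set F : Finset E := hTfin.toFinset with hFdef
  have hFmem : ∀ x : E, x ∈ F ↔ (x ∈ L ∧ ‖x‖ ≤ R ∧ x ≠ 0) := by
    intro x; rw [hFdef, Set.Finite.mem_toFinset]; rfl
  have hsum : ∑ᶠ x ∈ {x : E | x ∈ L ∧ ‖x‖ ≤ R ∧ x ≠ 0}, ‖x‖ ^ 2 = ∑ x ∈ F, ‖x‖ ^ 2 := by
    rw [← Set.Finite.coe_toFinset hTfin, finsum_mem_coe_finset]
  -- pairwise disjointness on F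
  have hFdisj : (F : Set E).Pairwise (Function.onFun Disjoint C) := by
    intro x hx y hy hxy
    exact hdisj x ((hFmem x).mp hx).1 y ((hFmem y).mp hy).1 hxy
  -- each cell is in the big ball
  have hCsub : ∀ x ∈ F, C x ⊆ closedBall (0 : E) (R + d) := by
    intro x hx y hy
    have h1 : ‖y - x‖ ≤ d := hd _ ((hmemC x y).mp hy)
    have h2 : ‖x‖ ≤ R := ((hFmem x).mp hx).2.1
    have : ‖y‖ ≤ ‖y - x‖ + ‖x‖ := by
      simpa using norm_add_le (y - x) x
    simp only [mem_closedBall_zero_iff]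
    linarith
  have hintC : ∀ x ∈ F, IntegrableOn (fun y : E => ‖y‖ ^ 2) (C x) :=
    fun x hx => integrableOn_normsq_of_bounded (hmeasC x) (hCsub x hx)
  -- integral over the union
  set U : Set E := ⋃ x ∈ F, C x with hUdef
  have hUmeas : MeasurableSet U := F.measurableSet_biUnion (fun x _ => hmeasC x)
  have hUsub : U ⊆ closedBall (0 : E) (R + d) := by
    rw [hUdef]; exact Set.iUnion₂_subset hCsub
  have hUint : ∫ y in U, ‖y‖ ^ 2 = ∑ x ∈ F, ∫ y in C x, ‖y‖ ^ 2 :=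
    integral_biUnion_finset F (fun x _ => hmeasC x) hFdisj hintC
  -- cardinality bound
  have hvolU : volume U = F.card := by
    rw [hUdef, measure_biUnion_finset hFdisj (fun x _ => hmeasC x)]
    simp [hvolC]
  have hcard_bound : (F.card : ℝ) ≤ (R + d) ^ k * Vb := by
    have hle : volume U ≤ volume (closedBall (0 : E) (R + d)) := measure_mono hUsub
    have hballvol : volume (closedBall (0 : E) (R + d))
        = ENNReal.ofReal ((R + d) ^ k) * volume (closedBall (0 : E) 1) := by
      rw [Measure.addHaar_closedBall' volume 0 (by linarith : (0:ℝ) ≤ R + d)]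
      congr 2
      rw [show Module.finrank ℝ E = k by simp [E, finrank_euclideanSpace]]
    calc (F.card : ℝ) = (volume U).toReal := by rw [hvolU]; simp
      _ ≤ (ENNReal.ofReal ((R + d) ^ k) * volume (closedBall (0 : E) 1)).toReal := by
          refine ENNReal.toReal_mono ?_ (hballvol ▸ hle)
          exact ENNReal.mul_ne_top ENNReal.ofReal_ne_top measure_closedBall_lt_top.ne
      _ = (R + d) ^ k * Vb := by
          rw [ENNReal.toReal_mul, ENNReal.toReal_ofReal (by positivity)]
  -- step: per-cell estimate
  have hcell : ∀ x ∈ F, |‖x‖ ^ 2 - ∫ y in C x, ‖y‖ ^ 2| ≤ (2 * R + d) * d := by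
    intro x hx
    obtain ⟨hxL, hxR, hx0⟩ := (hFmem x).mp hx
    have hvolfin : volume (C x) < ⊤ := by rw [hvolC]; exact ENNReal.one_lt_top
    have hvol1 : (volume (C x)).toReal = 1 := by rw [hvolC]; simp
    have hconst : ∫ _y in C x, (‖x‖ ^ 2 : ℝ) = ‖x‖ ^ 2 := by
      rw [setIntegral_const, smul_eq_mul, measureReal_def, hvol1, one_mul]
    have heq : ‖x‖ ^ 2 - ∫ y in C x, ‖y‖ ^ 2 = ∫ y in C x, (‖x‖ ^ 2 - ‖y‖ ^ 2) := by
      rw [integral_sub (integrableOn_const (C := ‖x‖ ^ 2) hvolfin.ne) (hintC x hx), hconst]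
    rw [heq, ← Real.norm_eq_abs]
    have hbound : ∀ y ∈ C x, ‖‖x‖ ^ 2 - ‖y‖ ^ 2‖ ≤ (2 * R + d) * d := by
      intro y hy
      have h1 : ‖y - x‖ ≤ d := hd _ ((hmemC x y).mp hy)
      have h2 : ‖y‖ ≤ R + d := by
        have := norm_add_le (y - x) x
        simp only [sub_add_cancel] at this
        linarith
      have h3 : |‖x‖ - ‖y‖| ≤ d := by
        refine le_trans (abs_norm_sub_norm_le x y) ?_
        rw [norm_sub_rev]; exact h1
      have hsplit : ‖x‖ ^ 2 - ‖y‖ ^ 2 = (‖x‖ - ‖y‖) * (‖x‖ + ‖y‖) := by ring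
      rw [Real.norm_eq_abs, hsplit, abs_mul]
      have h4 : |‖x‖ + ‖y‖| ≤ 2 * R + d := by
        rw [abs_of_nonneg (by positivity)]; linarith
      calc |‖x‖ - ‖y‖| * |‖x‖ + ‖y‖| ≤ d * (2 * R + d) :=
            mul_le_mul h3 h4 (abs_nonneg _) hd0
        _ = (2 * R + d) * d := by ring
    have := norm_setIntegral_le_of_norm_le_const (μ := volume) (s := C x) hvolfin
      hbound
    rw [measureReal_def, hvol1, mul_one] at this
    exact this
  -- step: sum vs integral over U
  have hSU : |(∑ x ∈ F, ‖x‖ ^ 2) - ∫ y in U, ‖y‖ ^ 2| ≤ (F.card : ℝ) * ((2 * R + d) * d) := by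
    rw [hUint, ← Finset.sum_sub_distrib]
    calc |∑ x ∈ F, (‖x‖ ^ 2 - ∫ y in C x, ‖y‖ ^ 2)|
        ≤ ∑ x ∈ F, |‖x‖ ^ 2 - ∫ y in C x, ‖y‖ ^ 2| := Finset.abs_sum_le_sum_abs _ _
      _ ≤ ∑ _x ∈ F, ((2 * R + d) * d) := Finset.sum_le_sum hcell
      _ = (F.card : ℝ) * ((2 * R + d) * d) := by rw [Finset.sum_const, nsmul_eq_mul]
  -- step: integral over U vs integral over ball
  have hIntBig : IntegrableOn (fun y : E => ‖y‖ ^ 2) (closedBall (0 : E) (R + d)) :=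
    integrableOn_normsq_of_bounded measurableSet_closedBall subset_rfl
  have hIntU : IntegrableOn (fun y : E => ‖y‖ ^ 2) U := hIntBig.mono_set hUsub
  have hDsub' : D ⊆ closedBall (0 : E) (R + d) :=
    hDsub.trans (closedBall_subset_closedBall (by linarith))
  have hIntD : IntegrableOn (fun y : E => ‖y‖ ^ 2) D := hIntBig.mono_set hDsub'
  have hsub2 : closedBall (0 : E) (R - d) ⊆ U ∪ D := by
    intro y hy
    have hynorm : ‖y‖ ≤ R - d := by simpa [mem_closedBall, dist_eq_norm] using hy
    obtain ⟨x, hxL, hyC, hxn⟩ := hcover y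
    by_cases hx0 : x = 0
    · right
      have := (hmemC x y).mp hyC
      rw [hx0] at this
      simpa using this
    · left
      have hxF : x ∈ F := (hFmem x).mpr ⟨hxL, by linarith, hx0⟩
      exact Set.mem_biUnion hxF hyC
  have hUI : |(∫ y in U, ‖y‖ ^ 2) - I R| ≤ (I (R + d) - I (R - d)) + cD := by
    have hIU_le : (∫ y in U, ‖y‖ ^ 2) ≤ I (R + d) := by
      refine setIntegral_mono_set hIntBig ?_ (HasSubset.Subset.eventuallyLE hUsub)
      exact Filter.Eventually.of_forall (fun y => by positivity)
    have hsmall_le : I (R - d) ≤ (∫ y in U, ‖y‖ ^ 2) + cD := by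
      have h1 : I (R - d) ≤ ∫ y in U ∪ D, ‖y‖ ^ 2 := by
        refine setIntegral_mono_set ((hIntU.union hIntD)) ?_
          (HasSubset.Subset.eventuallyLE hsub2)
        exact Filter.Eventually.of_forall (fun y => by positivity)
      have h2 : ∫ y in U ∪ D, ‖y‖ ^ 2 ≤ (∫ y in U, ‖y‖ ^ 2) + cD := by
        have hrw : U ∪ D = U ∪ (D \ U) := (Set.union_diff_self).symm
        rw [hrw, setIntegral_union Set.disjoint_sdiff_right (hmeasD.diff hUmeas) hIntU
          (hIntD.mono_set Set.diff_subset)]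
        have h3 : ∫ y in D \ U, ‖y‖ ^ 2 ≤ cD := by
          refine setIntegral_mono_set hIntD ?_
            (HasSubset.Subset.eventuallyLE Set.diff_subset)
          exact Filter.Eventually.of_forall (fun y => by positivity)
        linarith
      linarith
    have hImono1 : I (R - d) ≤ I R := by
      refine setIntegral_mono_set (hIntBig.mono_set (closedBall_subset_closedBall (by linarith))) ?_
        (HasSubset.Subset.eventuallyLE (closedBall_subset_closedBall (by linarith)))
      exact Filter.Eventually.of_forall (fun y => by positivity)
    have hImono2 : I R ≤ I (R + d) := by
      refine setIntegral_mono_set hIntBig ?_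
        (HasSubset.Subset.eventuallyLE (closedBall_subset_closedBall (by linarith)))
      exact Filter.Eventually.of_forall (fun y => by positivity)
    rw [abs_le]
    constructor <;> linarith
  -- I values
  have hIval : ∀ r : ℝ, 0 < r → I r = c₂ * r ^ (k + 2) := by
    intro r hr; rw [hIdef]; simp only []; rw [int_scale k hr, ← hc₂def]
  have hIgap : I (R + d) - I (R - d) ≤ c₂ * (k + 2) * (2 * d) * (2 * R) ^ (k + 1) := by
    have e1 : I (R + d) = c₂ * (R + d) ^ (k + 2) := hIval _ (by linarith)
    have e2 : I (R - d) = c₂ * (R - d) ^ (k + 2) := hIval _ (by linarith)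
    rw [e1, e2, ← mul_sub]
    have hpg := pow_gap (k + 1) (a := R + d) (b := R - d) (by linarith) (by linarith)
    have hple : (R + d) ^ (k + 1) ≤ (2 * R) ^ (k + 1) :=
      pow_le_pow_left₀ (by linarith) (by linarith) _
    have hcoef : ((k + 1 : ℕ) + 1 : ℝ) = (k + 2 : ℝ) := by push_cast; ring
    have hsub : (R + d) - (R - d) = 2 * d := by ring
    rw [hsub] at hpg
    have h5 : (R + d) ^ (k + 1 + 1) - (R - d) ^ (k + 1 + 1)
        ≤ (k + 2 : ℝ) * (2 * d) * (2 * R) ^ (k + 1) := by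
      calc (R + d) ^ (k + 1 + 1) - (R - d) ^ (k + 1 + 1)
          ≤ ((k + 1 : ℕ) + 1 : ℝ) * (2 * d) * (R + d) ^ (k + 1) := hpg
        _ = (k + 2 : ℝ) * (2 * d) * (R + d) ^ (k + 1) := by rw [hcoef]
        _ ≤ (k + 2 : ℝ) * (2 * d) * (2 * R) ^ (k + 1) := by
            refine mul_le_mul_of_nonneg_left hple ?_
            positivity
    have h6 : (R + d) ^ (k + 2) - (R - d) ^ (k + 2)
        ≤ (k + 2 : ℝ) * (2 * d) * (2 * R) ^ (k + 1) := by
      convert h5 using 3 <;> omega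
    calc c₂ * ((R + d) ^ (k + 2) - (R - d) ^ (k + 2))
        ≤ c₂ * ((k + 2 : ℝ) * (2 * d) * (2 * R) ^ (k + 1)) :=
          mul_le_mul_of_nonneg_left h6 hc₂nonneg
      _ = c₂ * (k + 2) * (2 * d) * (2 * R) ^ (k + 1) := by ring
  -- final combination
  have hsum' : (∑ᶠ (x : E) (_ : x ∈ L ∧ ‖x‖ ≤ R ∧ x ≠ 0), ‖x‖ ^ 2) = ∑ x ∈ F, ‖x‖ ^ 2 := hsum
  rw [hsum', Real.norm_eq_abs, Real.norm_eq_abs,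
    abs_of_nonneg (by positivity : (0:ℝ) ≤ R ^ (k + 1))]
  have hIR : I R = c₂ * R ^ (k + 2) := hIval R hR0
  have hsplit : (∑ x ∈ F, ‖x‖ ^ 2) - c₂ * R ^ (k + 2)
      = ((∑ x ∈ F, ‖x‖ ^ 2) - ∫ y in U, ‖y‖ ^ 2) + ((∫ y in U, ‖y‖ ^ 2) - I R) := by
    rw [hIR]; ring
  have p1 : (R + d) ^ k ≤ 2 ^ k * R ^ k := by
    calc (R + d) ^ k ≤ (2 * R) ^ k := pow_le_pow_left₀ (by linarith) (by linarith) k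
      _ = 2 ^ k * R ^ k := mul_pow 2 R k
  have p2 : ((2 : ℝ) * R) ^ (k + 1) = 2 ^ (k + 1) * R ^ (k + 1) := mul_pow 2 R (k + 1)
  have p3 : R ^ (k + 1) = R ^ k * R := pow_succ R k
  have h2Rd : (2 * R + d) ≤ 3 * R := by linarith
  have t1 : ((R + d) ^ k * Vb) * ((2 * R + d) * d) ≤ Vb * 2 ^ k * 3 * d * R ^ (k + 1) := by
    calc ((R + d) ^ k * Vb) * ((2 * R + d) * d)
        ≤ ((2 ^ k * R ^ k) * Vb) * ((3 * R) * d) := by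
          refine mul_le_mul (mul_le_mul_of_nonneg_right p1 hVbnonneg)
            (mul_le_mul_of_nonneg_right h2Rd hd0)
            (mul_nonneg (by linarith) hd0) (by positivity)
      _ = Vb * 2 ^ k * 3 * d * (R ^ k * R) := by ring
      _ = Vb * 2 ^ k * 3 * d * R ^ (k + 1) := by rw [← p3]
  have t2 : c₂ * (k + 2) * (2 * d) * (2 * R) ^ (k + 1)
      = c₂ * (k + 2) * (2 * d) * 2 ^ (k + 1) * R ^ (k + 1) := by rw [p2]; ring
  have t3 : cD ≤ cD * R ^ (k + 1) :=
    le_mul_of_one_le_right hcDnonneg (one_le_pow₀ hR1)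
  have hcardmul : (F.card : ℝ) * ((2 * R + d) * d)
      ≤ ((R + d) ^ k * Vb) * ((2 * R + d) * d) := by
    refine mul_le_mul_of_nonneg_right hcard_bound ?_
    have : (0:ℝ) ≤ 2 * R + d := by linarith
    exact mul_nonneg this hd0
  have hexpand : (Vb * 2 ^ k * 3 * d + c₂ * (k + 2) * (2 * d) * 2 ^ (k + 1) + cD) * R ^ (k + 1)
      = Vb * 2 ^ k * 3 * d * R ^ (k + 1)
        + c₂ * (k + 2) * (2 * d) * 2 ^ (k + 1) * R ^ (k + 1) + cD * R ^ (k + 1) := by ring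
  calc |(∑ x ∈ F, ‖x‖ ^ 2) - c₂ * R ^ (k + 2)|
      ≤ |(∑ x ∈ F, ‖x‖ ^ 2) - ∫ y in U, ‖y‖ ^ 2| + |(∫ y in U, ‖y‖ ^ 2) - I R| := by
        rw [hsplit]; exact abs_add_le _ _
    _ ≤ (F.card : ℝ) * ((2 * R + d) * d) + ((I (R + d) - I (R - d)) + cD) :=
        add_le_add hSU hUI
    _ ≤ (Vb * 2 ^ k * 3 * d + c₂ * (k + 2) * (2 * d) * 2 ^ (k + 1) + cD) * R ^ (k + 1) := by
        rw [hexpand]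
        have := hcardmul.trans t1
        linarith [hIgap, t2 ▸ hIgap]
end

section
/- The function f(x) = (3x^{-3}(sin x − x cos x))², extended by f(0) = 1, satisfies 0 ≤ f(x) ≤ 1 for all x ≥ 0 and f(x) → 0 as x → ∞. -/
open Filter

/-- Poitou's test function `f(x) = (3x⁻³(sin x − x cos x))²`, with `f(0) = 1`. -/
noncomputable def poitouF (x : ℝ) : ℝ :=
  if x = 0 then 1 else (3 * x ^ (-3 : ℤ) * (Real.sin x - x * Real.cos x)) ^ 2

private lemma poitou_hasDeriv (y : ℝ) :
    HasDerivAt (fun t : ℝ => Real.sin t - t * Real.cos t) (y * Real.sin y) y := by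
  have h1 := Real.hasDerivAt_sin y
  have h2 := (hasDerivAt_id y).mul (Real.hasDerivAt_cos y)
  have := h1.sub h2
  exact this.congr_deriv (by simp only [id_eq]; ring)

private lemma poitou_abs_key {x : ℝ} (hx : 0 ≤ x) :
    |Real.sin x - x * Real.cos x| ≤ x ^ 3 / 3 := by
  rw [abs_le]
  constructor
  · -- g t = t^3/3 + (sin t - t cos t) is monotone on [0, ∞)
    have mono : MonotoneOn (fun t : ℝ => t ^ 3 / 3 + (Real.sin t - t * Real.cos t))
        (Set.Ici 0) := by
      have hd : ∀ t : ℝ, HasDerivAt (fun t : ℝ => t ^ 3 / 3 + (Real.sin t - t * Real.cos t))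
          (t ^ 2 + t * Real.sin t) t := by
        intro t
        have h1 := (hasDerivAt_pow 3 t).div_const 3
        have := h1.add (poitou_hasDeriv t)
        exact this.congr_deriv (by push_cast; ring)
      apply monotoneOn_of_deriv_nonneg (convex_Ici 0)
      · exact (Continuous.continuousOn (by fun_prop))
      · intro t _; exact (hd t).differentiableAt.differentiableWithinAt
      · intro t ht
        rw [interior_Ici] at ht
        have ht0 : 0 < t := ht
        rw [(hd t).deriv]
        rcases le_or_gt 1 t with h1 | h1
        · nlinarith [Real.neg_one_le_sin t]
        · have hs : 0 ≤ Real.sin t :=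
            Real.sin_nonneg_of_nonneg_of_le_pi ht0.le (by nlinarith [Real.pi_gt_three])
          positivity
    have := mono Set.self_mem_Ici hx hx
    simp only [Real.sin_zero, Real.cos_zero] at this
    norm_num at this
    linarith
  · have mono : MonotoneOn (fun t : ℝ => t ^ 3 / 3 - (Real.sin t - t * Real.cos t))
        (Set.Ici 0) := by
      have hd : ∀ t : ℝ, HasDerivAt (fun t : ℝ => t ^ 3 / 3 - (Real.sin t - t * Real.cos t))
          (t ^ 2 - t * Real.sin t) t := by
        intro t
        have h1 := (hasDerivAt_pow 3 t).div_const 3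
        have := h1.sub (poitou_hasDeriv t)
        exact this.congr_deriv (by push_cast; ring)
      apply monotoneOn_of_deriv_nonneg (convex_Ici 0)
      · exact (Continuous.continuousOn (by fun_prop))
      · intro t _; exact (hd t).differentiableAt.differentiableWithinAt
      · intro t ht
        rw [interior_Ici] at ht
        have ht0 : 0 < t := ht
        rw [(hd t).deriv]
        nlinarith [Real.sin_le ht0.le]
    have := mono Set.self_mem_Ici hx hx
    simp only [Real.sin_zero, Real.cos_zero] at this
    norm_num at this
    linarith

/-- `f` satisfies `0 ≤ f(x) ≤ 1` for `x ≥ 0` and `f(x) → 0` as `x → ∞`. -/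
theorem poitouF_bounds :
    (∀ x : ℝ, 0 ≤ x → 0 ≤ poitouF x ∧ poitouF x ≤ 1) ∧
      Tendsto poitouF atTop (nhds 0) := by
  constructor
  · intro x hx
    refine ⟨?_, ?_⟩
    · unfold poitouF
      split
      · norm_num
      · positivity
    · rcases eq_or_lt_of_le hx with h | h
      · simp [poitouF, ← h]
      · have hx0 : x ≠ 0 := ne_of_gt h
        rw [poitouF, if_neg hx0]
        have hx3 : x ^ (-3 : ℤ) = (x ^ 3)⁻¹ := by
          rw [zpow_neg, show ((3:ℤ)) = ((3:ℕ):ℤ) from rfl, zpow_natCast]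
        have habs : |3 * x ^ (-3 : ℤ) * (Real.sin x - x * Real.cos x)| ≤ 1 := by
          rw [abs_mul, hx3]
          have h1 : |3 * (x ^ 3)⁻¹| = 3 / x ^ 3 := by
            rw [abs_of_pos (by positivity)]; ring
          rw [h1]
          calc 3 / x ^ 3 * |Real.sin x - x * Real.cos x|
              ≤ 3 / x ^ 3 * (x ^ 3 / 3) := by
                apply mul_le_mul_of_nonneg_left (poitou_abs_key hx) (by positivity)
            _ = 1 := by field_simp
        calc (3 * x ^ (-3 : ℤ) * (Real.sin x - x * Real.cos x)) ^ 2
            = |3 * x ^ (-3 : ℤ) * (Real.sin x - x * Real.cos x)| ^ 2 := (sq_abs _).symm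
          _ ≤ 1 := by nlinarith [abs_nonneg (3 * x ^ (-3 : ℤ) * (Real.sin x - x * Real.cos x))]
  · have hg : Tendsto (fun x : ℝ => 36 / x ^ 4) atTop (nhds 0) := by
      have h4 : Tendsto (fun x : ℝ => x ^ 4) atTop atTop :=
        tendsto_pow_atTop (by norm_num)
      have := h4.inv_tendsto_atTop
      have := this.const_mul (36 : ℝ)
      simpa [div_eq_mul_inv] using this
    apply squeeze_zero' (g := fun x : ℝ => 36 / x ^ 4)
    · filter_upwards [eventually_ge_atTop (1 : ℝ)] with x hx
      rw [poitouF, if_neg (by positivity : x ≠ 0)]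
      positivity
    · filter_upwards [eventually_ge_atTop (1 : ℝ)] with x hx
      have hx0 : 0 < x := lt_of_lt_of_le one_pos hx
      rw [poitouF, if_neg hx0.ne']
      have hx3 : x ^ (-3 : ℤ) = (x ^ 3)⁻¹ := by
        rw [zpow_neg, show ((3:ℤ)) = ((3:ℕ):ℤ) from rfl, zpow_natCast]
      rw [hx3]
      set t := Real.sin x - x * Real.cos x with ht
      have habs : |t| ≤ 2 * x := by
        calc |t| ≤ |Real.sin x| + |x * Real.cos x| := abs_sub _ _
          _ ≤ 1 + x * 1 := by
              gcongr
              · exact Real.abs_sin_le_one x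
              · rw [abs_mul, abs_of_pos hx0]
                exact mul_le_mul_of_nonneg_left (Real.abs_cos_le_one x) hx0.le
          _ ≤ 2 * x := by linarith
      have ht2 : t ^ 2 ≤ 4 * x ^ 2 := by
        nlinarith [sq_abs t, abs_nonneg t]
      have heq : (3 * (x ^ 3)⁻¹ * t) ^ 2 = 9 * t ^ 2 / x ^ 6 := by
        field_simp; ring
      rw [heq, div_le_div_iff₀ (by positivity) (by positivity)]
      nlinarith [pow_pos hx0 4, pow_pos hx0 2, sq_nonneg t]
    · exact hg
end
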